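/- The 1CSP instance E = (14, 42, l) with unit demands and l = (7, 7, 10, 10, 12, 15, 15, 21, 21, 21, 22, 22, 28, 31) satisfies Δ_p(E) = 17/16 = 1.0625. -/

import Mathlib

open Finset
open scoped ENNReal NNReal

/-- A 1CSP instance with unit demands: `n` is a positive integer, the piece
lengths satisfy `0 < l 0 ≤ l 1 ≤ … ≤ l (n-1) ≤ L`. -/
def IsInstance (n : ℕ) (L : ℝ) (l : Fin n → ℝ) : Prop :=
  0 < n ∧ (∀ i, 0 < l i) ∧ (∀ i j : Fin n, i ≤ j → l i ≤ l j) ∧ (∀ i, l i ≤ L)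

/-- a binary (0/1) pattern -/
def IsBinary {n : ℕ} (a : Fin n → ℕ) : Prop := ∀ i, a i ≤ 1

/-- The set of feasible patterns `P^f(E)`. -/
def feasiblePatterns (n : ℕ) (L : ℝ) (l : Fin n → ℝ) : Set (Fin n → ℕ) :=
  {a | ∑ i, l i * (a i : ℝ) ≤ L}

/-- The set of proper patterns `P^p(E)` (for unit demands). -/
def properPatterns (n : ℕ) (L : ℝ) (l : Fin n → ℝ) : Set (Fin n → ℕ) :=
  {a | IsBinary a ∧ ∑ i, l i * (a i : ℝ) ≤ L}

/-- `z_D(P,E)`: minimum of `∑ x_a` over finitely supported `x : P → ℤ_{≥0}`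
with `∑ x_a • a = 𝟏`; (`⊤` if infeasible). -/
noncomputable def zD (n : ℕ) (P : Set (Fin n → ℕ)) : ℝ≥0∞ :=
  sInf {c : ℝ≥0∞ | ∃ x : (Fin n → ℕ) →₀ ℕ,
    (∀ a ∈ x.support, a ∈ P) ∧
    (∀ i, ∑ a ∈ x.support, x a * a i = 1) ∧
    c = ∑ a ∈ x.support, (x a : ℝ≥0∞)}

/-- `z_C(P,E)`: infimum of `∑ x_a` over finitely supported `x : P → ℝ_{≥0}`
with `∑ x_a • a = 𝟏`; (`⊤` if infeasible). -/
noncomputable def zC (n : ℕ) (P : Set (Fin n → ℕ)) : ℝ≥0∞ :=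
  sInf {c : ℝ≥0∞ | ∃ x : (Fin n → ℕ) →₀ NNReal,
    (∀ a ∈ x.support, a ∈ P) ∧
    (∀ i, ∑ a ∈ x.support, (x a : ℝ) * (a i : ℝ) = 1) ∧
    c = ∑ a ∈ x.support, (x a : ℝ≥0∞)}

noncomputable def zDf (n : ℕ) (L : ℝ) (l : Fin n → ℝ) : ℝ≥0∞ :=
  zD n (feasiblePatterns n L l)

noncomputable def zCf (n : ℕ) (L : ℝ) (l : Fin n → ℝ) : ℝ≥0∞ :=
  zC n (feasiblePatterns n L l)

noncomputable def zCp (n : ℕ) (L : ℝ) (l : Fin n → ℝ) : ℝ≥0∞ :=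
  zC n (properPatterns n L l)

/-- the gap `Δ(E) = z_D^f(E) - z_C^f(E)` -/
noncomputable def gap (n : ℕ) (L : ℝ) (l : Fin n → ℝ) : ℝ≥0∞ :=
  zDf n L l - zCf n L l

/-- the proper gap `Δ_p(E) = z_D^f(E) - z_C^p(E)` -/
noncomputable def properGap (n : ℕ) (L : ℝ) (l : Fin n → ℝ) : ℝ≥0∞ :=
  zDf n L l - zCp n L l

/-- the dominance relation `a ⪯ b`: all suffix sums of `a` are at most those of `b`. -/
def Dominates {n : ℕ} (a b : Fin n → ℕ) : Prop :=
  ∀ j : Fin n, ∑ i ∈ univ.filter (fun i => j ≤ i), a i ≤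
    ∑ i ∈ univ.filter (fun i => j ≤ i), b i

def lN : Fin 14 → ℕ := ![7, 7, 10, 10, 12, 15, 15, 21, 21, 21, 22, 22, 28, 31]
def cN : Fin 14 → ℕ := ![2, 2, 3, 3, 4, 6, 6, 8, 8, 8, 10, 10, 12, 13]
def grp : Fin 14 → Fin 8 := ![0, 0, 1, 1, 2, 3, 3, 4, 4, 4, 5, 5, 6, 7]
def L8 : Fin 8 → ℕ := ![7, 10, 12, 15, 21, 22, 28, 31]
def C8 : Fin 8 → ℕ := ![2, 3, 4, 6, 8, 10, 12, 13]

lemma lN_grp : ∀ i, lN i = L8 (grp i) := by decide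
lemma cN_grp : ∀ i, cN i = C8 (grp i) := by decide
lemma grp_card : ∀ k : Fin 8, (univ.filter (fun i => grp i = k)).card = ![2,2,1,2,3,2,1,1] k := by decide

lemma bridge (S : Finset (Fin 14)) :
    ∃ n : Fin 8 → ℕ, (∀ k, n k ≤ ![2,2,1,2,3,2,1,1] k) ∧
      ∑ i ∈ S, lN i = ∑ k : Fin 8, n k * L8 k ∧
      ∑ i ∈ S, cN i = ∑ k : Fin 8, n k * C8 k := by
  refine ⟨fun k => (S.filter (fun i => grp i = k)).card, fun k => ?_, ?_, ?_⟩
  · rw [← grp_card k]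
    exact Finset.card_le_card (Finset.filter_subset_filter _ (Finset.subset_univ S))
  · rw [← Finset.sum_fiberwise_of_maps_to (fun i _ => Finset.mem_univ (grp i)) lN]
    refine Finset.sum_congr rfl fun k _ => ?_
    rw [Finset.sum_congr rfl (fun i hi => ?_), Finset.sum_const, smul_eq_mul]
    rw [lN_grp i, (Finset.mem_filter.mp hi).2]
  · rw [← Finset.sum_fiberwise_of_maps_to (fun i _ => Finset.mem_univ (grp i)) cN]
    refine Finset.sum_congr rfl fun k _ => ?_
    rw [Finset.sum_congr rfl (fun i hi => ?_), Finset.sum_const, smul_eq_mul]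
    rw [cN_grp i, (Finset.mem_filter.mp hi).2]



lemma dc_num : ∀ (a b : Fin 3) (c : Fin 2) (d : Fin 3) (e : Fin 4) (f : Fin 3) (g h : Fin 2),
    7*a.val+10*b.val+12*c.val+15*d.val+21*e.val+22*f.val+28*g.val+31*h.val ≤ 42 →
    2*a.val+3*b.val+4*c.val+6*d.val+8*e.val+10*f.val+12*g.val+13*h.val ≤ 16 := by decide

lemma g13_num : ∀ (a b : Fin 3) (c : Fin 2) (d : Fin 3) (e : Fin 4) (f : Fin 3) (g h : Fin 2),
    7*a.val+10*b.val+12*c.val+15*d.val+21*e.val+22*f.val+28*g.val+31*h.val ≤ 11 →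
    7*a.val+10*b.val+12*c.val+15*d.val+21*e.val+22*f.val+28*g.val+31*h.val ≤ 10 := by decide

lemma dual_check (S : Finset (Fin 14)) (h : ∑ i ∈ S, lN i ≤ 42) : ∑ i ∈ S, cN i ≤ 16 := by
  obtain ⟨n, hb, hl, hc⟩ := bridge S
  have h0 : n 0 ≤ 2 := le_trans (hb 0) (by decide)
  have h1 : n 1 ≤ 2 := le_trans (hb 1) (by decide)
  have h2 : n 2 ≤ 1 := le_trans (hb 2) (by decide)
  have h3 : n 3 ≤ 2 := le_trans (hb 3) (by decide)
  have h4 : n 4 ≤ 3 := le_trans (hb 4) (by decide)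
  have h5 : n 5 ≤ 2 := le_trans (hb 5) (by decide)
  have h6 : n 6 ≤ 1 := le_trans (hb 6) (by decide)
  have h7 : n 7 ≤ 1 := le_trans (hb 7) (by decide)
  simp only [Fin.sum_univ_eight, show L8 0 = 7 from rfl, show L8 1 = 10 from rfl, show L8 2 = 12 from rfl, show L8 3 = 15 from rfl, show L8 4 = 21 from rfl, show L8 5 = 22 from rfl, show L8 6 = 28 from rfl, show L8 7 = 31 from rfl, show C8 0 = 2 from rfl, show C8 1 = 3 from rfl, show C8 2 = 4 from rfl, show C8 3 = 6 from rfl, show C8 4 = 8 from rfl, show C8 5 = 10 from rfl, show C8 6 = 12 from rfl, show C8 7 = 13 from rfl] at hl hc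
  have key := dc_num ⟨n 0, by omega⟩ ⟨n 1, by omega⟩ ⟨n 2, by omega⟩ ⟨n 3, by omega⟩
    ⟨n 4, by omega⟩ ⟨n 5, by omega⟩ ⟨n 6, by omega⟩ ⟨n 7, by omega⟩
  simp only [] at key
  omega

lemma gap13 (S : Finset (Fin 14)) (h : ∑ i ∈ S, lN i ≤ 11) : ∑ i ∈ S, lN i ≤ 10 := by
  obtain ⟨n, hb, hl, -⟩ := bridge S
  have h0 : n 0 ≤ 2 := le_trans (hb 0) (by decide)
  have h1 : n 1 ≤ 2 := le_trans (hb 1) (by decide)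
  have h2 : n 2 ≤ 1 := le_trans (hb 2) (by decide)
  have h3 : n 3 ≤ 2 := le_trans (hb 3) (by decide)
  have h4 : n 4 ≤ 3 := le_trans (hb 4) (by decide)
  have h5 : n 5 ≤ 2 := le_trans (hb 5) (by decide)
  have h6 : n 6 ≤ 1 := le_trans (hb 6) (by decide)
  have h7 : n 7 ≤ 1 := le_trans (hb 7) (by decide)
  simp only [Fin.sum_univ_eight, show L8 0 = 7 from rfl, show L8 1 = 10 from rfl, show L8 2 = 12 from rfl, show L8 3 = 15 from rfl, show L8 4 = 21 from rfl, show L8 5 = 22 from rfl, show L8 6 = 28 from rfl, show L8 7 = 31 from rfl, show C8 0 = 2 from rfl, show C8 1 = 3 from rfl, show C8 2 = 4 from rfl, show C8 3 = 6 from rfl, show C8 4 = 8 from rfl, show C8 5 = 10 from rfl, show C8 6 = 12 from rfl, show C8 7 = 13 from rfl] at hl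
  have key := g13_num ⟨n 0, by omega⟩ ⟨n 1, by omega⟩ ⟨n 2, by omega⟩ ⟨n 3, by omega⟩
    ⟨n 4, by omega⟩ ⟨n 5, by omega⟩ ⟨n 6, by omega⟩ ⟨n 7, by omega⟩
  simp only [] at key
  omega

def smalls : Finset (Fin 14) := univ.filter (fun i => i.val ≤ 6)

lemma no6 {β : Type} [DecidableEq β] (g : Fin 14 → β)
    (hfib : ∀ i : Fin 14, ∑ j ∈ univ.filter (fun j => g j = g i), lN j ≤ 42)
    (hcard : (univ.image g).card ≤ 6) : False := by
  classical
  have hpair : ∀ i j : Fin 14, i ≠ j → g i = g j → lN i + lN j ≤ 42 := by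
    intro i j hij he
    have hsub : ({i, j} : Finset (Fin 14)) ⊆ univ.filter (fun k => g k = g i) := by
      intro k hk
      simp only [Finset.mem_insert, Finset.mem_singleton] at hk
      rcases hk with rfl | rfl <;> simp [he.symm]
    calc lN i + lN j = ∑ k ∈ ({i,j} : Finset (Fin 14)), lN k := (Finset.sum_pair hij).symm
      _ ≤ _ := Finset.sum_le_sum_of_subset hsub
      _ ≤ 42 := hfib i
  have htrip : ∀ i j k : Fin 14, i ≠ j → i ≠ k → j ≠ k → g i = g j → g i = g k →
      lN i + lN j + lN k ≤ 42 := by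
    intro i j k hij hik hjk hgj hgk
    have hsub : ({i, j, k} : Finset (Fin 14)) ⊆ univ.filter (fun m => g m = g i) := by
      intro m hm
      simp only [Finset.mem_insert, Finset.mem_singleton] at hm
      rcases hm with rfl | rfl | rfl <;> simp [hgj.symm, hgk.symm]
    have hsum : ∑ m ∈ ({i,j,k} : Finset (Fin 14)), lN m = lN i + (lN j + lN k) := by
      rw [Finset.sum_insert (by simp [hij, hik]), Finset.sum_pair hjk]
    calc lN i + lN j + lN k = ∑ m ∈ ({i,j,k} : Finset (Fin 14)), lN m := by rw [hsum]; ring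
      _ ≤ _ := Finset.sum_le_sum_of_subset hsub
      _ ≤ 42 := hfib i
  have hlow : ∀ i : Fin 14, 7 ≤ lN i := by decide
  have hsmall15 : ∀ i : Fin 14, i.val ≤ 6 → lN i ≤ 15 := by decide
  -- the core argument, for p,q sharing a bin and r the third 21 in another bin
  have core : ∀ p q r : Fin 14, lN p = 21 → lN q = 21 → lN r = 21 →
      p ≠ q → p ≠ r → q ≠ r → g p = g q → g p ≠ g r → False := by
    intro p q r hlp hlq hlr hpq hpr hqr hgpq hgpr
    have nP : ∀ t : Fin 14, lN t ≠ 21 → g p ≠ g t := by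
      intro t h21 h
      have hpt : p ≠ t := fun e => h21 (e ▸ hlp)
      have hqt : q ≠ t := fun e => h21 (e ▸ hlq)
      have := htrip p q t hpq hpt hqt hgpq h
      have := hlow t
      omega
    have nR : ∀ t : Fin 14, 22 ≤ lN t → g r ≠ g t := by
      intro t h22 h
      have hrt : r ≠ t := fun e => by rw [e] at hlr; omega
      have := hpair r t hrt h
      omega
    have nP10 : g p ≠ g 10 := nP 10 (by decide)
    have nP11 : g p ≠ g 11 := nP 11 (by decide)
    have nP12 : g p ≠ g 12 := nP 12 (by decide)
    have nP13 : g p ≠ g 13 := nP 13 (by decide)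
    have nR10 : g r ≠ g 10 := nR 10 (by decide)
    have nR11 : g r ≠ g 11 := nR 11 (by decide)
    have nR12 : g r ≠ g 12 := nR 12 (by decide)
    have nR13 : g r ≠ g 13 := nR 13 (by decide)
    have n1011 : g 10 ≠ g 11 := fun h => by
      have := hpair 10 11 (by decide) h; revert this; decide
    have n1012 : g 10 ≠ g 12 := fun h => by
      have := hpair 10 12 (by decide) h; revert this; decide
    have n1013 : g 10 ≠ g 13 := fun h => by
      have := hpair 10 13 (by decide) h; revert this; decide
    have n1112 : g 11 ≠ g 12 := fun h => by
      have := hpair 11 12 (by decide) h; revert this; decide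
    have n1113 : g 11 ≠ g 13 := fun h => by
      have := hpair 11 13 (by decide) h; revert this; decide
    have n1213 : g 12 ≠ g 13 := fun h => by
      have := hpair 12 13 (by decide) h; revert this; decide
    -- the six bins
    have hC6 : ({g p, g r, g 10, g 11, g 12, g 13} : Finset β).card = 6 := by
      rw [Finset.card_insert_of_notMem (by
          simp only [Finset.mem_insert, Finset.mem_singleton]
          push_neg
          exact ⟨hgpr, nP10, nP11, nP12, nP13⟩),
        Finset.card_insert_of_notMem (by
          simp only [Finset.mem_insert, Finset.mem_singleton]
          push_neg
          exact ⟨nR10, nR11, nR12, nR13⟩),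
        Finset.card_insert_of_notMem (by
          simp only [Finset.mem_insert, Finset.mem_singleton]
          push_neg
          exact ⟨n1011, n1012, n1013⟩),
        Finset.card_insert_of_notMem (by
          simp only [Finset.mem_insert, Finset.mem_singleton]
          push_neg
          exact ⟨n1112, n1113⟩),
        Finset.card_pair n1213]
    have hCB : ({g p, g r, g 10, g 11, g 12, g 13} : Finset β) ⊆ univ.image g := by
      intro b hb
      simp only [Finset.mem_insert, Finset.mem_singleton] at hb
      rcases hb with rfl | rfl | rfl | rfl | rfl | rfl <;>
        exact Finset.mem_image_of_mem g (Finset.mem_univ _)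
    have hBC : univ.image g = ({g p, g r, g 10, g 11, g 12, g 13} : Finset β) :=
      (Finset.eq_of_subset_of_card_le hCB (by rw [hC6]; exact hcard)).symm
    have hmem : ∀ i : Fin 14, g i ∈ ({g p, g r, g 10, g 11, g 12, g 13} : Finset β) := by
      intro i
      rw [← hBC]
      exact Finset.mem_image_of_mem g (Finset.mem_univ i)
    have hsm : ∀ i : Fin 14, i.val ≤ 6 → g i ≠ g p := by
      intro i hi h
      have hip : p ≠ i := fun e => by
        have := hsmall15 i hi; rw [← e, hlp] at this; omega
      have hiq : q ≠ i := fun e => by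
        have := hsmall15 i hi; rw [← e, hlq] at this; omega
      have := htrip p q i hpq hip hiq hgpq h.symm
      have := hlow i
      omega
    -- where the 15s can go
    have h5 : g 5 = g r ∨ g 5 = g 10 ∨ g 5 = g 11 := by
      have hm := hmem 5
      simp only [Finset.mem_insert, Finset.mem_singleton] at hm
      rcases hm with h | h | h | h | h | h
      · exact absurd h (hsm 5 (by decide))
      · exact Or.inl h
      · exact Or.inr (Or.inl h)
      · exact Or.inr (Or.inr h)
      · exact absurd (hpair 5 12 (by decide) h) (by decide)
      · exact absurd (hpair 5 13 (by decide) h) (by decide)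
    have h6 : g 6 = g r ∨ g 6 = g 10 ∨ g 6 = g 11 := by
      have hm := hmem 6
      simp only [Finset.mem_insert, Finset.mem_singleton] at hm
      rcases hm with h | h | h | h | h | h
      · exact absurd h (hsm 6 (by decide))
      · exact Or.inl h
      · exact Or.inr (Or.inl h)
      · exact Or.inr (Or.inr h)
      · exact absurd (hpair 6 12 (by decide) h) (by decide)
      · exact absurd (hpair 6 13 (by decide) h) (by decide)
    -- a 15-bin contains nothing else
    have hone : ∀ s k : Fin 14, s.val ≤ 6 → lN s = 15 → 21 ≤ lN k → g s = g k →
        smalls.filter (fun i => g i = g k) = {s} := by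
      intro s k hs hls hlk h
      apply Finset.eq_singleton_iff_unique_mem.mpr
      refine ⟨by simp [smalls, Finset.mem_filter, hs, h], ?_⟩
      intro i hi
      simp only [smalls, Finset.mem_filter, Finset.mem_univ, true_and] at hi
      obtain ⟨hi1, hi2⟩ := hi
      by_contra his
      have hik : k ≠ i := fun e => by
        have := hsmall15 i hi1; rw [← e] at this; omega
      have hsk : k ≠ s := fun e => by rw [← e] at hls; omega
      have := htrip k s i hsk hik (fun e => his (e.symm)) h.symm hi2.symm
      have := hlow i
      omega
    have f15 : ∀ s k : Fin 14, s.val ≤ 6 → lN s = 15 → 21 ≤ lN k → g s = g k →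
        ∑ i ∈ smalls.filter (fun i => g i = g k), lN i = 15 := by
      intro s k hs hls hlk h
      rw [hone s k hs hls hlk h, Finset.sum_singleton, hls]
    -- fiber capacity for bins of big items
    have hcap : ∀ j : Fin 14, 7 ≤ j.val →
        (∑ i ∈ smalls.filter (fun i => g i = g j), lN i) + lN j ≤ 42 := by
      intro j hj
      have hnotin : j ∉ smalls.filter (fun i => g i = g j) := by
        simp only [smalls, Finset.mem_filter, Finset.mem_univ, true_and, not_and]
        intro hj6
        omega
      have hsub : insert j (smalls.filter (fun i => g i = g j)) ⊆
          univ.filter (fun k => g k = g j) := by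
        intro m hm
        simp only [Finset.mem_insert, smalls, Finset.mem_filter, Finset.mem_univ, true_and] at hm ⊢
        rcases hm with rfl | ⟨-, hm2⟩
        · rfl
        · exact hm2
      calc (∑ i ∈ smalls.filter (fun i => g i = g j), lN i) + lN j
          = ∑ i ∈ insert j (smalls.filter (fun i => g i = g j)), lN i := by
            rw [Finset.sum_insert hnotin]; ring
        _ ≤ ∑ i ∈ univ.filter (fun k => g k = g j), lN i := Finset.sum_le_sum_of_subset hsub
        _ ≤ 42 := hfib j
    -- total small mass and its fiber decomposition
    have htot : ∑ b ∈ ({g p, g r, g 10, g 11, g 12, g 13} : Finset β),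
        ∑ i ∈ smalls.filter (fun i => g i = b), lN i = 76 := by
      rw [Finset.sum_fiberwise_of_maps_to (fun i _ => hmem i) lN]
      decide
    have hexp : (∑ i ∈ smalls.filter (fun i => g i = g p), lN i)
        + ((∑ i ∈ smalls.filter (fun i => g i = g r), lN i)
        + ((∑ i ∈ smalls.filter (fun i => g i = g 10), lN i)
        + ((∑ i ∈ smalls.filter (fun i => g i = g 11), lN i)
        + ((∑ i ∈ smalls.filter (fun i => g i = g 12), lN i)
        + (∑ i ∈ smalls.filter (fun i => g i = g 13), lN i))))) = 76 := by
      rw [← htot,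
        Finset.sum_insert (by
          simp only [Finset.mem_insert, Finset.mem_singleton]
          push_neg
          exact ⟨hgpr, nP10, nP11, nP12, nP13⟩),
        Finset.sum_insert (by
          simp only [Finset.mem_insert, Finset.mem_singleton]
          push_neg
          exact ⟨nR10, nR11, nR12, nR13⟩),
        Finset.sum_insert (by
          simp only [Finset.mem_insert, Finset.mem_singleton]
          push_neg
          exact ⟨n1011, n1012, n1013⟩),
        Finset.sum_insert (by
          simp only [Finset.mem_insert, Finset.mem_singleton]
          push_neg
          exact ⟨n1112, n1113⟩),
        Finset.sum_pair n1213]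
    have hFp : ∑ i ∈ smalls.filter (fun i => g i = g p), lN i = 0 := by
      rw [Finset.filter_eq_empty_iff.mpr, Finset.sum_empty]
      intro i hi
      exact hsm i (by simpa [smalls] using hi)
    have cR : (∑ i ∈ smalls.filter (fun i => g i = g r), lN i) + 21 ≤ 42 := by
      have := hcap r (by
        by_contra hc
        have : lN r ≤ 15 := hsmall15 r (by omega)
        omega)
      omega
    have c10 : (∑ i ∈ smalls.filter (fun i => g i = g 10), lN i) + 22 ≤ 42 := by
      have := hcap 10 (by decide)
      have e : lN 10 = 22 := by decide
      omega
    have c11 : (∑ i ∈ smalls.filter (fun i => g i = g 11), lN i) + 22 ≤ 42 := by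
      have := hcap 11 (by decide)
      have e : lN 11 = 22 := by decide
      omega
    have c12 : (∑ i ∈ smalls.filter (fun i => g i = g 12), lN i) + 28 ≤ 42 := by
      have := hcap 12 (by decide)
      have e : lN 12 = 28 := by decide
      omega
    have c13 : (∑ i ∈ smalls.filter (fun i => g i = g 13), lN i) ≤ 10 := by
      apply gap13
      have := hcap 13 (by decide)
      have e : lN 13 = 31 := by decide
      omega
    -- case analysis on where the two 15s live
    have hl5 : lN 5 = 15 := by decide
    have hl6 : lN 6 = 15 := by decide
    have h56 : ∀ k : Fin 14, 21 ≤ lN k → g 5 = g k → g 6 = g k → False := by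
      intro k hk h5k h6k
      have h5ne : k ≠ 5 := fun e => by rw [e] at hk; omega
      have h6ne : k ≠ 6 := fun e => by rw [e] at hk; omega
      have := htrip k 5 6 h5ne h6ne (by decide) h5k.symm h6k.symm
      omega
    have hlr21 : (21 : ℕ) ≤ lN r := le_of_eq hlr.symm
    have hl10 : (21 : ℕ) ≤ lN 10 := by decide
    have hl11 : (21 : ℕ) ≤ lN 11 := by decide
    rcases h5 with h5a | h5a | h5a <;> rcases h6 with h6a | h6a | h6a
    · exact h56 r hlr21 h5a h6a
    · have e1 := f15 5 r (by decide) hl5 hlr21 h5a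
      have e2 := f15 6 10 (by decide) hl6 hl10 h6a
      omega
    · have e1 := f15 5 r (by decide) hl5 hlr21 h5a
      have e2 := f15 6 11 (by decide) hl6 hl11 h6a
      omega
    · have e1 := f15 5 10 (by decide) hl5 hl10 h5a
      have e2 := f15 6 r (by decide) hl6 hlr21 h6a
      omega
    · exact h56 10 hl10 h5a h6a
    · have e1 := f15 5 10 (by decide) hl5 hl10 h5a
      have e2 := f15 6 11 (by decide) hl6 hl11 h6a
      omega
    · have e1 := f15 5 11 (by decide) hl5 hl11 h5a
      have e2 := f15 6 r (by decide) hl6 hlr21 h6a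
      omega
    · have e1 := f15 5 11 (by decide) hl5 hl11 h5a
      have e2 := f15 6 10 (by decide) hl6 hl10 h6a
      omega
    · exact h56 11 hl11 h5a h6a
  -- main case analysis on the three 21s
  by_cases h78 : g 7 = g 8
  · by_cases h79 : g 7 = g 9
    · have := htrip 7 8 9 (by decide) (by decide) (by decide) h78 h79
      revert this; decide
    · exact core 7 8 9 (by decide) (by decide) (by decide) (by decide) (by decide) (by decide)
        h78 h79
  · by_cases h79 : g 7 = g 9
    · exact core 7 9 8 (by decide) (by decide) (by decide) (by decide) (by decide) (by decide)
        h79 h78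
    · by_cases h89 : g 8 = g 9
      · exact core 8 9 7 (by decide) (by decide) (by decide) (by decide) (by decide) (by decide)
          h89 (fun h => h78 h.symm)
      · -- all seven big items in distinct bins: too many bins
        have nbig : ∀ i j : Fin 14, 7 ≤ i.val → 10 ≤ j.val → i ≠ j → g i ≠ g j := by
          intro i j hi hj hij h
          have h1 := hpair i j hij h
          have h2 : ∀ i j : Fin 14, 7 ≤ i.val → 10 ≤ j.val → i ≠ j → ¬ (lN i + lN j ≤ 42) := by
            decide
          exact h2 i j hi hj hij h1
        have hC7 : ({g 7, g 8, g 9, g 10, g 11, g 12, g 13} : Finset β).card = 7 := by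
          rw [Finset.card_insert_of_notMem (by
              simp only [Finset.mem_insert, Finset.mem_singleton]
              push_neg
              exact ⟨h78, h79, nbig 7 10 (by decide) (by decide) (by decide),
                nbig 7 11 (by decide) (by decide) (by decide),
                nbig 7 12 (by decide) (by decide) (by decide),
                nbig 7 13 (by decide) (by decide) (by decide)⟩),
            Finset.card_insert_of_notMem (by
              simp only [Finset.mem_insert, Finset.mem_singleton]
              push_neg
              exact ⟨h89, nbig 8 10 (by decide) (by decide) (by decide),
                nbig 8 11 (by decide) (by decide) (by decide),
                nbig 8 12 (by decide) (by decide) (by decide),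
                nbig 8 13 (by decide) (by decide) (by decide)⟩),
            Finset.card_insert_of_notMem (by
              simp only [Finset.mem_insert, Finset.mem_singleton]
              push_neg
              exact ⟨nbig 9 10 (by decide) (by decide) (by decide),
                nbig 9 11 (by decide) (by decide) (by decide),
                nbig 9 12 (by decide) (by decide) (by decide),
                nbig 9 13 (by decide) (by decide) (by decide)⟩),
            Finset.card_insert_of_notMem (by
              simp only [Finset.mem_insert, Finset.mem_singleton]
              push_neg
              exact ⟨nbig 10 11 (by decide) (by decide) (by decide),
                nbig 10 12 (by decide) (by decide) (by decide),
                nbig 10 13 (by decide) (by decide) (by decide)⟩),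
            Finset.card_insert_of_notMem (by
              simp only [Finset.mem_insert, Finset.mem_singleton]
              push_neg
              exact ⟨nbig 11 12 (by decide) (by decide) (by decide),
                nbig 11 13 (by decide) (by decide) (by decide)⟩),
            Finset.card_pair (nbig 12 13 (by decide) (by decide) (by decide))]
        have hsub : ({g 7, g 8, g 9, g 10, g 11, g 12, g 13} : Finset β) ⊆ univ.image g := by
          intro b hb
          simp only [Finset.mem_insert, Finset.mem_singleton] at hb
          rcases hb with rfl | rfl | rfl | rfl | rfl | rfl | rfl <;>
            exact Finset.mem_image_of_mem g (Finset.mem_univ _)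
        have := Finset.card_le_card hsub
        rw [hC7] at this
        omega

noncomputable def lR : Fin 14 → ℝ := ![7, 7, 10, 10, 12, 15, 15, 21, 21, 21, 22, 22, 28, 31]

lemma lR_eq : ∀ i, lR i = (lN i : ℝ) := by
  intro i
  fin_cases i <;> norm_num [lR, lN]

-- binary weighted sum as subset sum
lemma wsum_eq (v : Fin 14 → ℕ) (a : Fin 14 → ℕ) (hb : ∀ i, a i ≤ 1) :
    ∑ i, v i * a i = ∑ i ∈ univ.filter (fun i => a i = 1), v i := by
  rw [Finset.sum_filter]
  apply Finset.sum_congr rfl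
  intro i _
  have := hb i
  have h : a i = 0 ∨ a i = 1 := by omega
  rcases h with h | h <;> simp [h]

-- extraction of the assignment function from an exact integer cover
lemma extract (x : (Fin 14 → ℕ) →₀ ℕ)
    (hcov : ∀ i, ∑ a ∈ x.support, x a * a i = 1) :
    ∀ i : Fin 14, ∃ a, a ∈ x.support ∧ a i = 1 ∧ ∀ b ∈ x.support, b i ≠ 0 → b = a := by
  intro i
  have h := hcov i
  have hex : ∃ a ∈ x.support, x a * a i ≠ 0 := by
    by_contra hno
    push_neg at hno
    rw [Finset.sum_eq_zero hno] at h
    exact absurd h (by norm_num)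
  obtain ⟨a, ha, hne⟩ := hex
  have hxa : x a ≠ 0 := Finsupp.mem_support_iff.mp ha
  have heq : x a * a i + ∑ b ∈ x.support.erase a, x b * b i = ∑ b ∈ x.support, x b * b i :=
    by simpa using Finset.add_sum_erase x.support (fun b => x b * b i) ha
  have h1 : 1 ≤ x a * a i := Nat.one_le_iff_ne_zero.mpr hne
  have hx1 : 1 ≤ x a := Nat.one_le_iff_ne_zero.mpr hxa
  have hterm : x a * a i = 1 ∧ ∑ b ∈ x.support.erase a, x b * b i = 0 := by
    generalize hS : ∑ b ∈ x.support, x b * b i = S at h heq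
    generalize hR : ∑ b ∈ x.support.erase a, x b * b i = R at heq ⊢
    generalize hA : x a * a i = A at heq h1 ⊢
    clear hS hR hA hcov hne
    omega
  obtain ⟨hterm, hrest⟩ := hterm
  have hai0 : a i ≠ 0 := fun e => by rw [e, mul_zero] at hterm; exact absurd hterm (by norm_num)
  have hai2 : a i < 2 := by
    by_contra h'
    push_neg at h'
    have hh := Nat.mul_le_mul hx1 h'
    rw [hterm] at hh
    exact absurd hh (by norm_num)
  have hai : a i = 1 := by
    clear hcov hne h heq hrest hterm h1 hx1 hxa ha
    omega
  refine ⟨a, ha, hai, ?_⟩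
  intro b hb hbne
  by_contra hne2
  have hbmem : b ∈ x.support.erase a := Finset.mem_erase.mpr ⟨hne2, hb⟩
  have hz := (Finset.sum_eq_zero_iff.mp hrest) b hbmem
  exact hbne (by
    have hxb : x b ≠ 0 := Finsupp.mem_support_iff.mp hb
    rcases Nat.mul_eq_zero.mp hz with h' | h'
    · exact absurd h' hxb
    · exact h')

-- ## upper bound constructions

/-- the 7 bins of an optimal integer solution -/
def Q7 : Fin 7 → Fin 14 → ℕ :=
  ![![0,0,0,1,0,0,0,0,0,0,0,0,0,1],
    ![1,1,0,0,0,0,0,0,0,0,0,0,1,0],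
    ![0,0,0,0,0,0,0,1,1,0,0,0,0,0],
    ![0,0,0,0,0,1,0,0,0,0,1,0,0,0],
    ![0,0,0,0,0,0,1,0,0,0,0,1,0,0],
    ![0,0,0,0,1,0,0,0,0,1,0,0,0,0],
    ![0,0,1,0,0,0,0,0,0,0,0,0,0,0]]

/-- the 14 patterns of an optimal fractional proper solution -/
def Q : Fin 14 → Fin 14 → ℕ :=
  ![![0,0,1,1,0,0,0,0,0,0,0,1,0,0],
    ![0,0,0,0,0,0,0,1,1,0,0,0,0,0],
    ![0,0,1,1,0,0,0,0,0,0,1,0,0,0],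
    ![0,0,0,0,0,0,0,0,1,1,0,0,0,0],
    ![0,0,0,0,1,0,0,0,0,0,0,0,1,0],
    ![0,1,0,0,1,0,0,0,0,0,1,0,0,0],
    ![0,0,0,0,0,1,0,0,0,0,0,1,0,0],
    ![0,0,1,0,0,0,0,0,0,0,0,0,0,1],
    ![0,0,0,0,0,0,1,0,0,0,1,0,0,0],
    ![0,0,0,0,0,0,0,1,0,1,0,0,0,0],
    ![1,0,0,0,1,0,0,0,0,0,1,0,0,0],
    ![0,0,0,0,1,1,1,0,0,0,0,0,0,0],
    ![0,0,0,1,0,0,0,0,0,0,0,0,0,1],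
    ![1,1,0,0,0,0,0,0,0,0,0,0,1,0]]

/-- the corresponding weights, in sixteenths -/
def wN : Fin 14 → ℕ := ![7,8,1,8,3,3,9,8,9,8,3,7,8,13]

lemma hQ7inj : Function.Injective Q7 := by decide
lemma hQinj : Function.Injective Q := by decide

lemma zDf_le : zDf 14 42 lR ≤ 7 := by
  classical
  set x0 : Fin 7 →₀ ℕ := ⟨univ, fun _ => 1, by simp⟩ with hx0
  set x : (Fin 14 → ℕ) →₀ ℕ := x0.mapDomain Q7 with hx
  have hsupp : x.support = univ.image Q7 := by
    rw [hx, Finsupp.mapDomain_support_of_injective hQ7inj]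
  have hxapp : ∀ k, x (Q7 k) = 1 := by
    intro k
    rw [hx, Finsupp.mapDomain_apply hQ7inj]
    rfl
  apply sInf_le
  refine ⟨x, ?_, ?_, ?_⟩
  · intro a ha
    rw [hsupp] at ha
    obtain ⟨k, -, rfl⟩ := Finset.mem_image.mp ha
    show ∑ i, lR i * (Q7 k i : ℝ) ≤ 42
    have hnat : ∑ i, lN i * Q7 k i ≤ 42 := by revert k; decide
    calc ∑ i, lR i * (Q7 k i : ℝ) = ∑ i, ((lN i * Q7 k i : ℕ) : ℝ) := by
          apply Finset.sum_congr rfl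
          intro i _
          rw [lR_eq i]
          push_cast
          ring
      _ = ((∑ i, lN i * Q7 k i : ℕ) : ℝ) := by rw [Nat.cast_sum]
      _ ≤ 42 := by exact_mod_cast hnat
  · intro i
    rw [hsupp, Finset.sum_image (fun a _ b _ h => hQ7inj h)]
    have : ∀ k, x (Q7 k) * Q7 k i = Q7 k i := fun k => by rw [hxapp k, one_mul]
    rw [Finset.sum_congr rfl (fun k _ => this k)]
    have hdec : ∀ i : Fin 14, ∑ k : Fin 7, Q7 k i = 1 := by decide
    exact hdec i
  · rw [hsupp, Finset.sum_image (fun a _ b _ h => hQ7inj h)]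
    have : ∀ k : Fin 7, ((x (Q7 k) : ℕ) : ℝ≥0∞) = 1 := fun k => by rw [hxapp k]; norm_num
    rw [Finset.sum_congr rfl (fun k _ => this k)]
    simp

lemma zDf_ge : (7 : ℝ≥0∞) ≤ zDf 14 42 lR := by
  classical
  apply le_sInf
  rintro c ⟨x, hP, hcov, rfl⟩
  have hcast : ∑ a ∈ x.support, ((x a : ℕ) : ℝ≥0∞) = ((∑ a ∈ x.support, x a : ℕ) : ℝ≥0∞) := by
    rw [Nat.cast_sum]
  rw [hcast]
  have h7 : 7 ≤ ∑ a ∈ x.support, x a := by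
    by_contra hlt
    push_neg at hlt
    obtain ⟨g, hg⟩ := Classical.axiomOfChoice (extract x hcov)
    have hg1 : ∀ i, g i ∈ x.support := fun i => (hg i).1
    have hg2 : ∀ i, g i i = 1 := fun i => (hg i).2.1
    have hg3 : ∀ i, ∀ b ∈ x.support, b i ≠ 0 → b = g i := fun i => (hg i).2.2
    apply no6 g
    · intro i
      have hfeas : g i ∈ feasiblePatterns 14 42 lR := hP (g i) (hg1 i)
      have hreal : ∑ j, lR j * (g i j : ℝ) ≤ 42 := hfeas
      have hnat : ∑ j, lN j * g i j ≤ 42 := by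
        have : ∑ j, lR j * (g i j : ℝ) = ((∑ j, lN j * g i j : ℕ) : ℝ) := by
          rw [Nat.cast_sum]
          apply Finset.sum_congr rfl
          intro j _
          rw [lR_eq j]
          push_cast
          ring
        rw [this] at hreal
        exact_mod_cast hreal
      calc ∑ j ∈ univ.filter (fun j => g j = g i), lN j
          = ∑ j ∈ univ.filter (fun j => g j = g i), lN j * g i j := by
            apply Finset.sum_congr rfl
            intro j hj
            have hji : g j = g i := (Finset.mem_filter.mp hj).2
            rw [← hji, hg2 j, mul_one]
        _ ≤ ∑ j, lN j * g i j := Finset.sum_le_sum_of_subset (Finset.filter_subset _ _)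
        _ ≤ 42 := hnat
    · have h1 : (univ.image g).card ≤ x.support.card := by
        apply Finset.card_le_card
        intro b hb
        obtain ⟨i, -, rfl⟩ := Finset.mem_image.mp hb
        exact hg1 i
      have h2 : x.support.card ≤ ∑ a ∈ x.support, x a := by
        rw [Finset.card_eq_sum_ones]
        exact Finset.sum_le_sum (fun a ha => Nat.one_le_iff_ne_zero.mpr (Finsupp.mem_support_iff.mp ha))
      omega
  exact_mod_cast h7

lemma zDf_val : zDf 14 42 lR = 7 := le_antisymm zDf_le zDf_ge

lemma zCp_le : zCp 14 42 lR ≤ 95 / 16 := by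
  classical
  have hwne : ∀ k : Fin 14, wN k ≠ 0 := by decide
  set w : Fin 14 → ℝ≥0 := fun k => (wN k : ℝ≥0) / 16 with hw
  have hwne' : ∀ k, w k ≠ 0 := by
    intro k
    rw [hw]
    exact div_ne_zero (Nat.cast_ne_zero.mpr (hwne k)) (by norm_num)
  set x0 : Fin 14 →₀ ℝ≥0 := ⟨univ, w, by
    intro a
    simp only [Finset.mem_univ, true_iff]
    exact hwne' a⟩ with hx0
  set x : (Fin 14 → ℕ) →₀ ℝ≥0 := x0.mapDomain Q with hx
  have hsupp : x.support = univ.image Q := by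
    rw [hx, Finsupp.mapDomain_support_of_injective hQinj]
  have hxapp : ∀ k, x (Q k) = w k := by
    intro k
    rw [hx, Finsupp.mapDomain_apply hQinj]
    rfl
  apply sInf_le
  refine ⟨x, ?_, ?_, ?_⟩
  · intro a ha
    rw [hsupp] at ha
    obtain ⟨k, -, rfl⟩ := Finset.mem_image.mp ha
    constructor
    · intro i
      revert k i; decide
    · show ∑ i, lR i * (Q k i : ℝ) ≤ 42
      have hnat : ∑ i, lN i * Q k i ≤ 42 := by revert k; decide
      calc ∑ i, lR i * (Q k i : ℝ) = ((∑ i, lN i * Q k i : ℕ) : ℝ) := by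
            rw [Nat.cast_sum]
            apply Finset.sum_congr rfl
            intro i _
            rw [lR_eq i]
            push_cast
            ring
        _ ≤ 42 := by exact_mod_cast hnat
  · intro i
    rw [hsupp, Finset.sum_image (fun a _ b _ h => hQinj h)]
    have hnat : ∑ k, wN k * Q k i = 16 := by revert i; decide
    calc ∑ k, (x (Q k) : ℝ) * (Q k i : ℝ)
        = ∑ k, ((wN k * Q k i : ℕ) : ℝ) / 16 := by
          apply Finset.sum_congr rfl
          intro k _
          rw [hxapp k, hw]
          push_cast
          ring
      _ = ((∑ k, wN k * Q k i : ℕ) : ℝ) / 16 := by rw [← Finset.sum_div, Nat.cast_sum]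
      _ = 1 := by rw [hnat]; norm_num
  · rw [hsupp, Finset.sum_image (fun a _ b _ h => hQinj h)]
    have : ∀ k : Fin 14, ((x (Q k) : ℝ≥0) : ℝ≥0∞) = (wN k : ℝ≥0∞) / 16 := by
      intro k
      rw [hxapp k, hw, ENNReal.coe_div (by norm_num)]
      push_cast
      rfl
    rw [Finset.sum_congr rfl (fun k _ => this k)]
    simp only [div_eq_mul_inv, ← Finset.sum_mul]
    congr 1
    rw [← Nat.cast_sum, show ∑ k, wN k = 95 from by decide]
    norm_num

lemma zCp_ge : (95 / 16 : ℝ≥0∞) ≤ zCp 14 42 lR := by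
  classical
  apply le_sInf
  rintro c ⟨x, hP, hcov, rfl⟩
  -- dual bound for each proper pattern
  have hdual : ∀ a ∈ x.support, ∑ i, (cN i : ℝ) * (a i : ℝ) ≤ 16 := by
    intro a ha
    obtain ⟨hbin, hlen⟩ := hP a ha
    have hnatlen : ∑ i, lN i * a i ≤ 42 := by
      have : ∑ i, lR i * (a i : ℝ) = ((∑ i, lN i * a i : ℕ) : ℝ) := by
        rw [Nat.cast_sum]
        apply Finset.sum_congr rfl
        intro i _
        rw [lR_eq i]
        push_cast
        ring
      rw [this] at hlen
      exact_mod_cast hlen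
    rw [wsum_eq lN a hbin] at hnatlen
    have hc := dual_check _ hnatlen
    rw [← wsum_eq cN a hbin] at hc
    calc ∑ i, (cN i : ℝ) * (a i : ℝ) = ((∑ i, cN i * a i : ℕ) : ℝ) := by
          rw [Nat.cast_sum]; push_cast; rfl
      _ ≤ 16 := by exact_mod_cast hc
  have hkey : (95 : ℝ) ≤ 16 * ∑ a ∈ x.support, (x a : ℝ) := by
    have hchain : (95 : ℝ) = ∑ a ∈ x.support, (x a : ℝ) * ∑ i, (cN i : ℝ) * (a i : ℝ) := by
      have h1 : ∑ a ∈ x.support, (x a : ℝ) * ∑ i, (cN i : ℝ) * (a i : ℝ)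
          = ∑ a ∈ x.support, ∑ i : Fin 14, (cN i : ℝ) * ((x a : ℝ) * (a i : ℝ)) := by
        apply Finset.sum_congr rfl
        intro a _
        rw [Finset.mul_sum]
        apply Finset.sum_congr rfl
        intro i _
        ring
      rw [h1, Finset.sum_comm]
      have h2 : ∀ i : Fin 14, ∑ a ∈ x.support, (cN i : ℝ) * ((x a : ℝ) * (a i : ℝ))
          = (cN i : ℝ) := by
        intro i
        rw [← Finset.mul_sum, hcov i, mul_one]
      rw [Finset.sum_congr rfl (fun i _ => h2 i)]
      have : ∑ i : Fin 14, (cN i : ℝ) = ((∑ i, cN i : ℕ) : ℝ) := by rw [Nat.cast_sum]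
      rw [this, show ∑ i, cN i = 95 from by decide]
      norm_num
    rw [hchain]
    have : ∑ a ∈ x.support, (x a : ℝ) * ∑ i, (cN i : ℝ) * (a i : ℝ)
        ≤ ∑ a ∈ x.support, (x a : ℝ) * 16 := by
      apply Finset.sum_le_sum
      intro a ha
      exact mul_le_mul_of_nonneg_left (hdual a ha) (x a).coe_nonneg
    rw [← Finset.sum_mul] at this
    linarith
  have hnn : (95 / 16 : ℝ≥0) ≤ ∑ a ∈ x.support, x a := by
    rw [← NNReal.coe_le_coe]
    push_cast
    rw [div_le_iff₀ (by norm_num : (0:ℝ) < 16)]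
    linarith [hkey]
  have e1 : ((95 / 16 : ℝ≥0) : ℝ≥0∞) = 95 / 16 := by
    rw [ENNReal.coe_div (by norm_num)]
    norm_num
  calc (95 / 16 : ℝ≥0∞) = ((95 / 16 : ℝ≥0) : ℝ≥0∞) := e1.symm
    _ ≤ ((∑ a ∈ x.support, x a : ℝ≥0) : ℝ≥0∞) := ENNReal.coe_le_coe.mpr hnn
    _ = ∑ a ∈ x.support, ((x a : ℝ≥0) : ℝ≥0∞) := ENNReal.coe_finset_sum _ _
  
lemma zCp_val : zCp 14 42 lR = 95 / 16 := le_antisymm zCp_le zCp_ge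

/-- the instance `E = (14, 42, (7,7,10,10,12,15,15,21,21,21,22,22,28,31))`
satisfies `Δ_p(E) = 17/16`. -/
theorem stmt_19 :
    properGap 14 42 ![7, 7, 10, 10, 12, 15, 15, 21, 21, 21, 22, 22, 28, 31] = 17 / 16 := by
  have hl : (![7, 7, 10, 10, 12, 15, 15, 21, 21, 21, 22, 22, 28, 31] : Fin 14 → ℝ) = lR := rfl
  rw [properGap, hl, zDf_val, zCp_val]
  have h7 : (7 : ℝ≥0∞) = 17 / 16 + 95 / 16 := by
    rw [ENNReal.div_add_div_same]
    rw [ENNReal.eq_div_iff (by norm_num) (by norm_num)]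
    norm_num
  rw [h7, ENNReal.add_sub_cancel_right (by
    rw [div_eq_mul_inv]
    exact ENNReal.mul_ne_top (by norm_num) (ENNReal.inv_ne_top.mpr (by norm_num)))]
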